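/- arXiv:2009.09190 — 8 statements merged into one kernel-verified Lean document; each statement's English description precedes it below -/
import Mathlib

section
/- Let w ≥ 1, let p be a prime with p ≥ w, let q be coprime with p with q ≥ 2w−1, let L' = pq, and let g ∈ {1,...,p−1}. The Hamming auto-correlation of the CRT-UI sequence u_g with generator g satisfies: for τ ∈ Z_{L'}, if Φ_{p,q}(τ) = (gd mod p, d mod q) or Φ_{p,q}(τ) = (−gd mod p, −d mod q) for some d ∈ {0,1,...,w−1}, then H_{g,g}(τ) = w − d; for all other τ, H_{g,g}(τ) = 0. -/
/-- The CRT-UI sequence of period `p*q` with weight `w` and generator `g`: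
`u_g(t) = 1` iff `Φ_{p,q}(t) = (u*g mod p, u mod q)` for some `u ∈ {0,...,w-1}`.
It is modeled as a function `ℕ → ℕ` (indexed modulo `p*q`). -/
def crtUI (p q w g : ℕ) : ℕ → ℕ := fun t =>
  if ∃ u ∈ Finset.range w, t % p = (u * g) % p ∧ t % q = u % q then 1 else 0

/-- The Hamming auto-correlation of the CRT-UI sequence `u_g` at offset `τ`. -/
def crtUIAutoCorr (p q w g : ℕ) (τ : ℕ) : ℕ :=
  ∑ t ∈ Finset.range (p * q), crtUI p q w g t * crtUI p q w g ((t + τ) % (p * q))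

lemma crtUI_corr_eq_card (w p q g τ : ℕ) (hp : 0 < p) (hq0 : 0 < q) (hwq : w ≤ q)
    (hpq : Nat.Coprime p q) :
    crtUIAutoCorr p q w g τ =
      ((Finset.range w).filter
        (fun u => ∃ v < w, (u * g + τ) % p = (v * g) % p ∧ (u + τ) % q = v % q)).card := by
  classical
  have hpq0 : 0 < p * q := Nat.mul_pos hp hq0
  have hdp : p ∣ p * q := ⟨q, rfl⟩
  have hdq : q ∣ p * q := ⟨p, mul_comm p q⟩
  have h1 : crtUIAutoCorr p q w g τ =
      ((Finset.range (p * q)).filter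
        (fun t => (∃ u ∈ Finset.range w, t % p = (u * g) % p ∧ t % q = u % q) ∧
          (∃ u ∈ Finset.range w, ((t + τ) % (p * q)) % p = (u * g) % p ∧
            ((t + τ) % (p * q)) % q = u % q))).card := by
    rw [crtUIAutoCorr, Finset.card_filter]
    refine Finset.sum_congr rfl fun t _ => ?_
    by_cases h1 : ∃ u ∈ Finset.range w, t % p = (u * g) % p ∧ t % q = u % q
    · by_cases h2 : ∃ u ∈ Finset.range w, ((t + τ) % (p * q)) % p = (u * g) % p ∧
          ((t + τ) % (p * q)) % q = u % q
      · rw [crtUI, if_pos h1, crtUI, if_pos h2, if_pos ⟨h1, h2⟩]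
      · rw [crtUI, if_pos h1, crtUI, if_neg h2, if_neg (fun h => h2 h.2)]
    · rw [crtUI, if_neg h1, if_neg (fun h => h1 h.1)]
      simp
  rw [h1]
  refine Finset.card_bij (fun t _ => t % q) ?_ ?_ ?_
  · rintro t ht
    rw [Finset.mem_filter] at ht
    obtain ⟨htr, ⟨u, hu, hup, huq⟩, ⟨v, hv, hvp, hvq⟩⟩ := ht
    rw [Finset.mem_range] at hu hv
    have huq' : t % q = u := by rw [huq, Nat.mod_eq_of_lt (lt_of_lt_of_le hu hwq)]
    simp only [Finset.mem_filter, Finset.mem_range]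
    rw [huq']
    refine ⟨hu, v, hv, ?_, ?_⟩
    · have h2 : (t + τ) % p = (v * g) % p := by
        rw [← Nat.mod_mod_of_dvd (t + τ) hdp, hvp]
      have h3 : u * g + τ ≡ t + τ [MOD p] := Nat.ModEq.add_right τ hup.symm
      exact h3.trans h2
    · have h2 : (t + τ) % q = v % q := by
        rw [← Nat.mod_mod_of_dvd (t + τ) hdq, hvq]
      have h3 : u + τ ≡ t + τ [MOD q] := Nat.ModEq.add_right τ huq.symm
      exact h3.trans h2
  · rintro t1 ht1 t2 ht2 h
    rw [Finset.mem_filter] at ht1 ht2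
    obtain ⟨ht1r, ⟨u1, hu1, hu1p, hu1q⟩, -⟩ := ht1
    obtain ⟨ht2r, ⟨u2, hu2, hu2p, hu2q⟩, -⟩ := ht2
    rw [Finset.mem_range] at hu1 hu2 ht1r ht2r
    have e1 : u1 = u2 := by
      have h2 : u1 % q = u2 % q := by rw [← hu1q, ← hu2q, h]
      rwa [Nat.mod_eq_of_lt (lt_of_lt_of_le hu1 hwq),
        Nat.mod_eq_of_lt (lt_of_lt_of_le hu2 hwq)] at h2
    have hmp : t1 ≡ t2 [MOD p] := by
      show t1 % p = t2 % p
      rw [hu1p, hu2p, e1]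
    have hmq : t1 ≡ t2 [MOD q] := h
    have h3 := (Nat.modEq_and_modEq_iff_modEq_mul hpq).mp ⟨hmp, hmq⟩
    rwa [Nat.ModEq, Nat.mod_eq_of_lt ht1r, Nat.mod_eq_of_lt ht2r] at h3
  · rintro u hu
    rw [Finset.mem_filter, Finset.mem_range] at hu
    obtain ⟨hu, v, hv, hvp, hvq⟩ := hu
    obtain ⟨k, hkp, hkq⟩ := Nat.chineseRemainder hpq (u * g) u
    set t := k % (p * q) with htdef
    have htr : t < p * q := Nat.mod_lt _ hpq0
    have htp : t % p = (u * g) % p := by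
      rw [htdef, Nat.mod_mod_of_dvd k hdp]; exact hkp
    have htq : t % q = u % q := by
      rw [htdef, Nat.mod_mod_of_dvd k hdq]; exact hkq
    have htq' : t % q = u := by rw [htq, Nat.mod_eq_of_lt (lt_of_lt_of_le hu hwq)]
    refine ⟨t, ?_, htq'⟩
    rw [Finset.mem_filter, Finset.mem_range]
    refine ⟨htr, ⟨u, Finset.mem_range.mpr hu, htp, htq⟩,
      v, Finset.mem_range.mpr hv, ?_, ?_⟩
    · rw [Nat.mod_mod_of_dvd (t + τ) hdp]
      have h3 : t + τ ≡ u * g + τ [MOD p] := Nat.ModEq.add_right τ htp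
      exact h3.trans hvp
    · rw [Nat.mod_mod_of_dvd (t + τ) hdq]
      have h3 : t + τ ≡ u + τ [MOD q] := Nat.ModEq.add_right τ htq
      exact h3.trans hvq

/-- the Hamming auto-correlation of a CRT-UI sequence with generator
`g ∈ {1,...,p-1}` equals `w - d` at offsets `τ` with `Φ_{p,q}(τ) = ±(g,1)·d` for some
`d ∈ {0,...,w-1}`, and equals `0` at all other offsets.
(Here `Φ_{p,q}(τ) = (g·d mod p, d mod q)` is expressed as
`τ % p = (g*d) % p ∧ τ % q = d % q`, and `Φ_{p,q}(τ) = (-g·d mod p, -d mod q)` as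
`(τ + g*d) % p = 0 ∧ (τ + d) % q = 0`.) -/
theorem crtUI_autoCorrelation
    (w p q g : ℕ) (hw : 1 ≤ w) (hp : p.Prime) (hpw : w ≤ p)
    (hpq : Nat.Coprime p q) (hq : 2 * w - 1 ≤ q)
    (hg1 : 1 ≤ g) (hg2 : g ≤ p - 1) (τ : ℕ) (hτ : τ < p * q) :
    (∀ d < w,
      ((τ % p = (g * d) % p ∧ τ % q = d % q) ∨
        ((τ + g * d) % p = 0 ∧ (τ + d) % q = 0)) →
      crtUIAutoCorr p q w g τ = w - d) ∧
    ((∀ d < w,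
      ¬((τ % p = (g * d) % p ∧ τ % q = d % q) ∨
        ((τ + g * d) % p = 0 ∧ (τ + d) % q = 0))) →
      crtUIAutoCorr p q w g τ = 0) := by
  classical
  have hp0 : 0 < p := hp.pos
  have hq0 : 0 < q := by omega
  have hwq : w ≤ q := by omega
  rw [crtUI_corr_eq_card w p q g τ hp0 hq0 hwq hpq]
  constructor
  · rintro d hd hcase
    rcases hcase with ⟨hτp, hτq⟩ | ⟨hτp, hτq⟩
    · -- τ ≡ g*d [MOD p], τ ≡ d [MOD q]; filter = those u with u + d < w
      have hfe : (Finset.range w).filter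
          (fun u => ∃ v < w, (u * g + τ) % p = (v * g) % p ∧ (u + τ) % q = v % q)
          = Finset.range (w - d) := by
        ext u
        simp only [Finset.mem_filter, Finset.mem_range]
        constructor
        · rintro ⟨hu, v, hv, hvp, hvq⟩
          have h1 : u + d ≡ v [MOD q] := by
            have h2 : u + τ ≡ u + d [MOD q] := Nat.ModEq.add_left u hτq
            exact h2.symm.trans hvq
          have h2 : u + d = v := by
            have hud : u + d < q := by omega
            have hvq' : v < q := by omega
            rwa [Nat.ModEq, Nat.mod_eq_of_lt hud, Nat.mod_eq_of_lt hvq'] at h1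
          omega
        · intro hu
          refine ⟨by omega, u + d, by omega, ?_, Nat.ModEq.add_left u hτq⟩
          calc u * g + τ ≡ u * g + g * d [MOD p] := Nat.ModEq.add_left _ hτp
            _ = (u + d) * g := by ring
      rw [hfe, Finset.card_range]
    · -- τ + g*d ≡ 0 [MOD p], τ + d ≡ 0 [MOD q]; filter = those u with d ≤ u
      have hτp' : τ + g * d ≡ 0 [MOD p] := by rw [Nat.ModEq, hτp, Nat.zero_mod]
      have hτq' : τ + d ≡ 0 [MOD q] := by rw [Nat.ModEq, hτq, Nat.zero_mod]
      have hfe : (Finset.range w).filter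
          (fun u => ∃ v < w, (u * g + τ) % p = (v * g) % p ∧ (u + τ) % q = v % q)
          = Finset.Ico d w := by
        ext u
        simp only [Finset.mem_filter, Finset.mem_range, Finset.mem_Ico]
        constructor
        · rintro ⟨hu, v, hv, hvp, hvq⟩
          have h1 : u + (τ + d) ≡ v + d [MOD q] := by
            simpa [add_assoc] using Nat.ModEq.add_right d hvq
          have h2 : u + (τ + d) ≡ u + 0 [MOD q] := Nat.ModEq.add_left u hτq'
          have h3 : u ≡ v + d [MOD q] := by
            have h4 := h2.symm.trans h1
            simpa using h4
          have h4 : u = v + d := by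
            have huq : u < q := by omega
            have hvd : v + d < q := by omega
            rwa [Nat.ModEq, Nat.mod_eq_of_lt huq, Nat.mod_eq_of_lt hvd] at h3
          omega
        · rintro ⟨hdu, hu⟩
          obtain ⟨k, rfl⟩ : ∃ k, u = d + k := ⟨u - d, by omega⟩
          have hk : d + k - d = k := by omega
          refine ⟨hu, k, by omega, ?_, ?_⟩
          · calc (d + k) * g + τ = k * g + (τ + g * d) := by ring
              _ ≡ k * g + 0 [MOD p] := Nat.ModEq.add_left _ hτp'
              _ = k * g := by ring
          · calc d + k + τ = k + (τ + d) := by ring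
              _ ≡ k + 0 [MOD q] := Nat.ModEq.add_left _ hτq'
              _ = k := by ring
      rw [hfe, Nat.card_Ico]
  · intro hnone
    rw [Finset.card_eq_zero, Finset.filter_eq_empty_iff]
    rintro u hu
    rw [Finset.mem_range] at hu
    rintro ⟨v, hv, hvp, hvq⟩
    by_cases huv : u ≤ v
    · have hdw : v - u < w := by omega
      refine hnone (v - u) hdw (Or.inl ⟨?_, ?_⟩)
      · have h1 : u * g + τ ≡ u * g + g * (v - u) [MOD p] := by
          have e : v * g = u * g + g * (v - u) := by
            obtain ⟨k, rfl⟩ : ∃ k, v = u + k := ⟨v - u, by omega⟩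
            have hk : u + k - u = k := by omega
            rw [hk]; ring
          rw [← e]; exact hvp
        exact Nat.ModEq.add_left_cancel' (u * g) h1
      · have h1 : u + τ ≡ u + (v - u) [MOD q] := by
          have e : v = u + (v - u) := by omega
          rw [← e]; exact hvq
        exact Nat.ModEq.add_left_cancel' u h1
    · have hdw : u - v < w := by omega
      refine hnone (u - v) hdw (Or.inr ⟨?_, ?_⟩)
      · have h1 : v * g + (τ + g * (u - v)) ≡ v * g + 0 [MOD p] := by
          have e : v * g + (τ + g * (u - v)) = u * g + τ := by
            obtain ⟨k, rfl⟩ : ∃ k, u = v + k := ⟨u - v, by omega⟩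
            have hk : v + k - v = k := by omega
            rw [hk]; ring
          rw [e]
          simpa [Nat.ModEq] using hvp
        have h2 := Nat.ModEq.add_left_cancel' (v * g) h1
        rwa [Nat.ModEq, Nat.zero_mod] at h2
      · have h1 : v + (τ + (u - v)) ≡ v + 0 [MOD q] := by
          have e : v + (τ + (u - v)) = u + τ := by omega
          rw [e]
          simpa [Nat.ModEq] using hvq
        have h2 := Nat.ModEq.add_left_cancel' v h1
        rwa [Nat.ModEq, Nat.zero_mod] at h2
end

section
/- Let w ≥ 1, let p be a prime with p ≥ w, and let q be coprime with p with q ≥ 2w−1. For any two distinct generators g, g' ∈ {1,...,p−1}, the Hamming cross-correlation of the CRT-UI sequences u_g and u_{g'} satisfies H_{g,g'}(τ) ≤ 1 for every relative time offset τ ∈ Z_{pq}. -/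
/-- for distinct generators `g, g' ∈ {1,...,p-1}`, the Hamming
cross-correlation of the CRT-UI sequences `u_g` and `u_{g'}` is at most `1` at every
relative time offset `τ ∈ Z_{pq}`. -/
theorem crtUI_crossCorrelation_le_one
    (w p q : ℕ) (hw : 1 ≤ w) (hp : p.Prime) (hpw : w ≤ p)
    (hpq : Nat.Coprime p q) (hq : 2 * w - 1 ≤ q)
    (g g' : ℕ) (hg1 : 1 ≤ g) (hg2 : g ≤ p - 1)
    (hg'1 : 1 ≤ g') (hg'2 : g' ≤ p - 1) (hgg' : g ≠ g') :
    ∀ τ < p * q,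
      ∑ t ∈ Finset.range (p * q),
        crtUI p q w g t * crtUI p q w g' ((t + τ) % (p * q)) ≤ 1 := by
  intro τ hτ
  have hp1 : 1 < p := hp.one_lt
  have hq0 : 0 < q := lt_of_lt_of_le (by omega) hq
  -- rewrite each summand as a single indicator
  have hrw : ∀ t ∈ Finset.range (p * q),
      crtUI p q w g t * crtUI p q w g' ((t + τ) % (p * q)) =
      if ((∃ u ∈ Finset.range w, t % p = (u * g) % p ∧ t % q = u % q) ∧
          (∃ v ∈ Finset.range w, (t + τ) % (p * q) % p = (v * g') % p ∧
            (t + τ) % (p * q) % q = v % q)) then 1 else 0 := by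
    intro t _
    unfold crtUI
    split_ifs <;> simp_all <;> tauto
  rw [Finset.sum_congr rfl hrw]
  rw [Finset.sum_boole]
  norm_cast
  rw [Finset.card_le_one]
  intro t1 ht1 t2 ht2
  simp only [Finset.mem_filter, Finset.mem_range] at ht1 ht2
  obtain ⟨ht1pq, ⟨u1, hu1, hu1p, hu1q⟩, v1, hv1, hv1p, hv1q⟩ := ht1
  obtain ⟨ht2pq, ⟨u2, hu2, hu2p, hu2q⟩, v2, hv2, hv2p, hv2q⟩ := ht2
  rw [Nat.mod_mod_of_dvd _ ⟨q, rfl⟩] at hv1p hv2p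
  rw [Nat.mod_mod_of_dvd _ ⟨p, mul_comm p q⟩] at hv1q hv2q
  -- mod q: v1 + u2 = v2 + u1
  have hq1 : (v1 + u2) ≡ (v2 + u1) [MOD q] := by
    have e1 : (t1 + τ) ≡ v1 [MOD q] := hv1q
    have e2 : (t2 + τ) ≡ v2 [MOD q] := hv2q
    have f1 : t1 ≡ u1 [MOD q] := hu1q
    have f2 : t2 ≡ u2 [MOD q] := hu2q
    -- v1 + u2 ≡ t1 + τ + t2 ≡ t2 + τ + t1 ≡ v2 + u1
    calc v1 + u2 ≡ (t1 + τ) + t2 [MOD q] := (e1.symm.add f2.symm)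
      _ = (t2 + τ) + t1 := by ring
      _ ≡ v2 + u1 [MOD q] := e2.add f1
  have hvu : v1 + u2 = v2 + u1 := by
    apply hq1.eq_of_lt_of_lt <;> omega
  -- mod p: p ∣ (v1 - v2) * g' - (u1 - u2) * g  over ℤ
  have hmodp : (v1 * g' + u2 * g) ≡ (v2 * g' + u1 * g) [MOD p] := by
    have e1 : (t1 + τ) ≡ v1 * g' [MOD p] := hv1p
    have e2 : (t2 + τ) ≡ v2 * g' [MOD p] := hv2p
    have f1 : t1 ≡ u1 * g [MOD p] := hu1p
    have f2 : t2 ≡ u2 * g [MOD p] := hu2p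
    calc v1 * g' + u2 * g ≡ (t1 + τ) + t2 [MOD p] := (e1.symm.add f2.symm)
      _ = (t2 + τ) + t1 := by ring
      _ ≡ v2 * g' + u1 * g [MOD p] := e2.add f1
  -- pass to ℤ
  have hZ : ((p : ℤ)) ∣ ((u1 : ℤ) - u2) * ((g' : ℤ) - g) := by
    have h := (Int.natCast_modEq_iff.mpr hmodp).dvd
    have hd : ((v1 : ℤ) - v2) = ((u1 : ℤ) - u2) := by
      have : (v1 : ℤ) + u2 = v2 + u1 := by exact_mod_cast congrArg (Nat.cast : ℕ → ℤ) hvu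
      linarith
    have : ((v2 * g' + u1 * g : ℕ) : ℤ) - ((v1 * g' + u2 * g : ℕ) : ℤ)
        = -((((u1 : ℤ) - u2) * ((g' : ℤ) - g))) := by push_cast; linear_combination (-(g':ℤ)) * hd
    rw [this] at h
    exact (dvd_neg.mp h)
  have hpZ : Prime ((p : ℤ)) := Int.prime_iff_natAbs_prime.mpr (by simpa using hp)
  have hgg : ¬ ((p : ℤ) ∣ ((g' : ℤ) - g)) := by
    intro hdvd
    have : ((g' : ℤ) - g) = 0 := Int.eq_zero_of_abs_lt_dvd hdvd (by
      rw [abs_lt]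
      constructor <;> omega)
    have : g' = g := by exact_mod_cast sub_eq_zero.mp this
    exact hgg' this.symm
  have hdu : (u1 : ℤ) - u2 = 0 := by
    rcases hpZ.dvd_mul.mp hZ with h | h
    · exact Int.eq_zero_of_abs_lt_dvd h (by rw [abs_lt]; constructor <;> omega)
    · exact absurd h hgg
  have huu : u1 = u2 := by
    have : (u1 : ℤ) = u2 := by linarith
    exact_mod_cast this
  subst huu
  -- now t1 ≡ t2 mod p and mod q
  have hmp : t1 ≡ t2 [MOD p] := by unfold Nat.ModEq; rw [hu1p, hu2p]
  have hmq : t1 ≡ t2 [MOD q] := by unfold Nat.ModEq; rw [hu1q, hu2q]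
  have := (Nat.modEq_and_modEq_iff_modEq_mul hpq).mp ⟨hmp, hmq⟩
  exact this.eq_of_lt_of_lt ht1pq ht2pq
end

section
/- Let s_1,...,s_K be binary sequences of common period L such that each sequence has Hamming weight at least K, and such that for all i ≠ j and every relative time offset τ ∈ Z_L the Hamming cross-correlation satisfies H_{i,j}(τ) ≤ 1. Then {s_1,...,s_K} is a (K,L)-UI sequence set. -/
/-- A set of `K` binary sequences of common period `L` (modeled as functions `ℕ → ℕ`
with values in `{0,1}`, indexed modulo `L`) is a `(K,L)`-UI sequence set if for all
time offsets `τ_1,...,τ_K ∈ Z_L` and every `i` there is a time slot `t ∈ Z_L` at which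
sequence `i` (shifted by `τ_i`) has a `1` and every other sequence `j` (shifted by
`τ_j`) has a `0`. -/
lemma shift_count (L : ℕ) (hL : 0 < L) (p : ℕ → Prop) [DecidablePred p] (a : ℕ) :
    ((Finset.range L).filter (fun t => p ((t + a) % L))).card
      = ((Finset.range L).filter p).card := by
  have key : ∀ t, t + a + (L - a % L) = t + L * (a / L + 1) := by
    intro t
    have h1 := Nat.div_add_mod a L
    have h2 := Nat.mod_lt a hL
    have h3 : L * (a / L + 1) = L * (a / L) + L := by ring
    omega
  have h1 : ∀ t, t < L → ((t + a) % L + (L - a % L)) % L = t := by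
    intro t ht
    rw [Nat.mod_add_mod, key t, Nat.add_mul_mod_self_left, Nat.mod_eq_of_lt ht]
  have h2 : ∀ t, t < L → (t + (L - a % L) + a) % L = t := by
    intro t ht
    have h3 : t + (L - a % L) + a = t + L * (a / L + 1) := by
      have := key t; omega
    rw [h3, Nat.add_mul_mod_self_left, Nat.mod_eq_of_lt ht]
  apply Finset.card_bij' (fun t _ => (t + a) % L) (fun t _ => (t + (L - a % L)) % L)
  · intro t ht
    simp only [Finset.mem_filter, Finset.mem_range] at ht ⊢
    exact ⟨Nat.mod_lt _ hL, ht.2⟩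
  · intro t ht
    simp only [Finset.mem_filter, Finset.mem_range] at ht ⊢
    refine ⟨Nat.mod_lt _ hL, ?_⟩
    rw [Nat.mod_add_mod, h2 t ht.1]
    exact ht.2
  · intro t ht
    simp only [Finset.mem_filter, Finset.mem_range] at ht
    exact h1 t ht.1
  · intro t ht
    simp only [Finset.mem_filter, Finset.mem_range] at ht
    rw [Nat.mod_add_mod]
    exact h2 t ht.1

def IsUISet (K L : ℕ) (s : Fin K → ℕ → ℕ) : Prop :=
  ∀ τ : Fin K → ℕ, (∀ i, τ i < L) → ∀ i : Fin K, ∃ t < L,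
    s i ((t + τ i) % L) = 1 ∧ ∀ j : Fin K, j ≠ i → s j ((t + τ j) % L) = 0

/-- if each of `K` binary sequences of period `L` has Hamming weight
at least `K`, and the Hamming cross-correlation between any two distinct sequences is
at most `1` at every relative offset, then they form a `(K,L)`-UI sequence set. -/
theorem isUISet_of_weight_ge_and_crossCorrelation_le_one
    (K L : ℕ) (hL : 0 < L) (s : Fin K → ℕ → ℕ)
    (hbin : ∀ i t, s i t = 0 ∨ s i t = 1)
    (hweight : ∀ i : Fin K, K ≤ ((Finset.range L).filter (fun t => s i t = 1)).card)
    (hcorr : ∀ i j : Fin K, i ≠ j → ∀ τ < L,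
      ∑ t ∈ Finset.range L, s i t * s j ((t + τ) % L) ≤ 1) :
    IsUISet K L s := by
  intro τ hτ i
  set B : Fin K → Finset ℕ :=
    fun j => (Finset.range L).filter (fun t => s j ((t + τ j) % L) = 1) with hB
  -- card of B i is at least K
  have hBi : K ≤ (B i).card := by
    rw [hB]
    simp only
    rw [shift_count L hL (fun u => s i u = 1) (τ i)]
    exact hweight i
  -- pairwise intersections are small
  have hint : ∀ j : Fin K, j ≠ i → (B i ∩ B j).card ≤ 1 := by
    intro j hj
    set τ' := (τ j + (L - τ i)) % L with hτ'
    have hτ'L : τ' < L := Nat.mod_lt _ hL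
    have hshift : ∀ t : ℕ, ((t + τ i) % L + τ') % L = (t + τ j) % L := by
      intro t
      rw [hτ', Nat.add_mod_mod, Nat.mod_add_mod]
      have : t + τ i + (τ j + (L - τ i)) = t + τ j + L := by
        have := hτ i; omega
      rw [this, Nat.add_mod_right]
    have heq : B i ∩ B j = (Finset.range L).filter
        (fun t => s i ((t + τ i) % L) = 1 ∧ s j (((t + τ i) % L + τ') % L) = 1) := by
      ext t
      simp only [hB, Finset.mem_inter, Finset.mem_filter, Finset.mem_range, hshift t]
      tauto
    rw [heq, shift_count L hL (fun u => s i u = 1 ∧ s j ((u + τ') % L) = 1) (τ i)]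
    calc ((Finset.range L).filter (fun u => s i u = 1 ∧ s j ((u + τ') % L) = 1)).card
        = ∑ t ∈ (Finset.range L).filter
            (fun u => s i u = 1 ∧ s j ((u + τ') % L) = 1), 1 := by
          rw [Finset.card_eq_sum_ones]
      _ ≤ ∑ t ∈ (Finset.range L).filter
            (fun u => s i u = 1 ∧ s j ((u + τ') % L) = 1), s i t * s j ((t + τ') % L) := by
          apply Finset.sum_le_sum
          intro t ht
          simp only [Finset.mem_filter] at ht
          rw [ht.2.1, ht.2.2]
      _ ≤ ∑ t ∈ Finset.range L, s i t * s j ((t + τ') % L) :=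
          Finset.sum_le_sum_of_subset (Finset.filter_subset _ _)
      _ ≤ 1 := hcorr i j (fun h => hj h.symm) τ' hτ'L
  -- the union of intersections is small
  set C : Finset ℕ := (Finset.univ.erase i).biUnion (fun j => B i ∩ B j) with hC
  have hCcard : C.card ≤ K - 1 := by
    calc C.card ≤ ∑ j ∈ Finset.univ.erase i, (B i ∩ B j).card := Finset.card_biUnion_le
      _ ≤ ∑ j ∈ Finset.univ.erase i, 1 := by
          apply Finset.sum_le_sum
          intro j hj
          exact hint j (Finset.ne_of_mem_erase hj)
      _ = (Finset.univ.erase i).card := by rw [Finset.sum_const, smul_eq_mul, mul_one]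
      _ = K - 1 := by
          rw [Finset.card_erase_of_mem (Finset.mem_univ i), Finset.card_univ,
            Fintype.card_fin]
  have hsd : 0 < (B i \ C).card := by
    have h1 := Finset.card_inter_add_card_sdiff (B i) C
    have h2 : (B i ∩ C).card ≤ C.card := Finset.card_le_card (Finset.inter_subset_right)
    have hK : 0 < K := Fin.pos i
    omega
  obtain ⟨t, ht⟩ := Finset.card_pos.mp hsd
  rw [Finset.mem_sdiff] at ht
  have htBi := ht.1
  simp only [hB, Finset.mem_filter, Finset.mem_range] at htBi
  refine ⟨t, htBi.1, htBi.2, ?_⟩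
  intro j hj
  have htj : t ∉ B j := by
    intro htj
    apply ht.2
    rw [hC]
    exact Finset.mem_biUnion.mpr ⟨j, Finset.mem_erase.mpr ⟨hj, Finset.mem_univ j⟩,
      Finset.mem_inter.mpr ⟨ht.1, htj⟩⟩
  simp only [hB, Finset.mem_filter, Finset.mem_range, not_and] at htj
  rcases hbin j ((t + τ j) % L) with h | h
  · exact h
  · exact absurd h (htj htBi.1)
end

section
/- For every prime K, there exists a (K, L)-UI sequence set with period L = K(2K−1) (obtained from the CRT-UI construction with weight w = K, p = K and q = 2K−1). -/
lemma crtui_key (p : ℕ) (hp : p.Prime) (i j A A' δ : ℕ)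
    (hi : i < p) (hj : j < p) (hij : i ≠ j) (hA : A < p) (hA' : A' < p)
    (h1 : (i * A % p + δ) % (2 * p - 1) = j * ((A + δ) % p) % p)
    (h2 : (i * A' % p + δ) % (2 * p - 1) = j * ((A' + δ) % p) % p) :
    A = A' := by
  haveI : Fact p.Prime := ⟨hp⟩
  have hp2 : 2 ≤ p := hp.two_le
  set q := 2 * p - 1 with hqdef
  set F := i * A % p with hF
  set F' := i * A' % p with hF'
  set G := j * ((A + δ) % p) % p with hG
  set G' := j * ((A' + δ) % p) % p with hG'
  have hFp : F < p := Nat.mod_lt _ (by omega)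
  have hF'p : F' < p := Nat.mod_lt _ (by omega)
  have hGp : G < p := Nat.mod_lt _ (by omega)
  have hG'p : G' < p := Nat.mod_lt _ (by omega)
  have m1 : Nat.ModEq q (F + δ) G := by
    unfold Nat.ModEq; rw [h1, Nat.mod_eq_of_lt (by omega)]
  have m2 : Nat.ModEq q (F' + δ) G' := by
    unfold Nat.ModEq; rw [h2, Nat.mod_eq_of_lt (by omega)]
  have m3 : Nat.ModEq q (F + δ + G') (G + (F' + δ)) := m1.add m2.symm
  have m4 : Nat.ModEq q (F + G' + δ) (G + F' + δ) := by
    have e1 : F + δ + G' = F + G' + δ := by omega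
    have e2 : G + (F' + δ) = G + F' + δ := by omega
    rwa [e1, e2] at m3
  have m5 : Nat.ModEq q (F + G') (G + F') := m4.add_right_cancel' δ
  have e : F + G' = G + F' := by
    have h := m5
    unfold Nat.ModEq at h
    rwa [Nat.mod_eq_of_lt (by omega), Nat.mod_eq_of_lt (by omega)] at h
  have cF : (F : ZMod p) = (i : ZMod p) * A := by
    rw [hF, ZMod.natCast_mod]; push_cast; ring
  have cF' : (F' : ZMod p) = (i : ZMod p) * A' := by
    rw [hF', ZMod.natCast_mod]; push_cast; ring
  have cG : (G : ZMod p) = (j : ZMod p) * ((A : ZMod p) + δ) := by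
    rw [hG, ZMod.natCast_mod, Nat.cast_mul, ZMod.natCast_mod]; push_cast; ring
  have cG' : (G' : ZMod p) = (j : ZMod p) * ((A' : ZMod p) + δ) := by
    rw [hG', ZMod.natCast_mod, Nat.cast_mul, ZMod.natCast_mod]; push_cast; ring
  have ec : ((F + G' : ℕ) : ZMod p) = ((G + F' : ℕ) : ZMod p) := by rw [e]
  push_cast at ec
  rw [cF, cF', cG, cG'] at ec
  have hne : (i : ZMod p) - (j : ZMod p) ≠ 0 := by
    intro h
    apply hij
    have hij' : (i : ZMod p) = (j : ZMod p) := by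
      have := sub_eq_zero.mp h; exact this
    have := congrArg ZMod.val hij'
    rwa [ZMod.val_cast_of_lt hi, ZMod.val_cast_of_lt hj] at this
  have hz : ((i : ZMod p) - j) * (A : ZMod p) = ((i : ZMod p) - j) * (A' : ZMod p) := by
    linear_combination ec
  have hAA : (A : ZMod p) = (A' : ZMod p) := mul_left_cancel₀ hne hz
  have := congrArg ZMod.val hAA
  rwa [ZMod.val_cast_of_lt hA, ZMod.val_cast_of_lt hA'] at this

lemma crtui_modaux (L d x y : ℕ) (hd : d ∣ L) : (x % L + y) % d = (x + y) % d := by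
  rw [Nat.add_mod, Nat.mod_mod_of_dvd x hd, ← Nat.add_mod]


/-- for every prime `K` there exists a `(K, L)`-UI sequence set with
period `L = K·(2K − 1)`. -/
theorem exists_UISet_of_prime (K : ℕ) (hK : K.Prime) :
    ∃ s : Fin K → ℕ → ℕ,
      (∀ i t, s i t = 0 ∨ s i t = 1) ∧ IsUISet K (K * (2 * K - 1)) s := by
  have hK2 : 2 ≤ K := hK.two_le
  set q := 2 * K - 1 with hqdef
  have hKq : K < q := by omega
  have hK0 : K ≠ 0 := by omega
  have hq0 : q ≠ 0 := by omega
  have hco : Nat.Coprime K q := by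
    rw [hK.coprime_iff_not_dvd]
    intro h
    have h2 : K ∣ 2 * K := Dvd.intro_left 2 rfl
    have h3 : K ∣ 2 * K - q := Nat.dvd_sub h2 h
    rw [show 2 * K - q = 1 by omega] at h3
    have := Nat.le_of_dvd one_pos h3
    omega
  set L := K * q with hLdef
  have hL0 : 0 < L := by
    rw [hLdef]; exact Nat.mul_pos (by omega) (by omega)
  have hKL : K ∣ L := Dvd.intro q rfl
  have hqL : q ∣ L := Dvd.intro_left K rfl
  refine ⟨fun j t => if t % q = j.val * (t % K) % K then 1 else 0, ?_, ?_⟩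
  · intro i t
    dsimp only
    split
    · exact Or.inr rfl
    · exact Or.inl rfl
  · intro τ hτ i
    set δ : Fin K → ℕ := fun j => L - τ i + τ j with hδ
    set Bad : Finset (Fin K) :=
      Finset.univ.filter (fun a : Fin K => ∃ j : Fin K, j ≠ i ∧
        (i.val * a.val % K + δ j) % q = j.val * ((a.val + δ j) % K) % K) with hBad
    -- Bad has at most K-1 elements
    have hcard : Bad.card ≤ K - 1 := by
      classical
      set f : Fin K → Fin K := fun a =>
        if h : ∃ j : Fin K, j ≠ i ∧
            (i.val * a.val % K + δ j) % q = j.val * ((a.val + δ j) % K) % K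
        then h.choose else i with hf
      have hmaps : ∀ a ∈ Bad, f a ∈ Finset.univ.erase i := by
        intro a ha
        rw [hBad, Finset.mem_filter] at ha
        obtain ⟨-, h⟩ := ha
        rw [hf]
        simp only [dif_pos h]
        exact Finset.mem_erase.mpr ⟨h.choose_spec.1, Finset.mem_univ _⟩
      have hinj : Set.InjOn f Bad := by
        intro a ha b hb hab
        rw [hBad, Finset.mem_coe, Finset.mem_filter] at ha hb
        obtain ⟨-, ha⟩ := ha
        obtain ⟨-, hb⟩ := hb
        rw [hf] at hab
        simp only [dif_pos ha, dif_pos hb] at hab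
        have sa := ha.choose_spec
        have sb := hb.choose_spec
        rw [hab] at sa
        have key := crtui_key K hK i.val (hb.choose).val a.val b.val (δ hb.choose)
          i.isLt (hb.choose).isLt
          (fun h => sb.1 (Fin.ext h.symm)) a.isLt b.isLt
          (by rw [← hqdef]; exact sa.2) (by rw [← hqdef]; exact sb.2)
        exact Fin.ext key
      have := Finset.card_le_card_of_injOn f hmaps hinj
      rwa [Finset.card_erase_of_mem (Finset.mem_univ i), Finset.card_univ,
        Fintype.card_fin] at this
    -- find a good a
    have hgood : ∃ a : Fin K, a ∉ Bad := by
      by_contra h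
      push_neg at h
      have : Finset.univ ⊆ Bad := fun a _ => h a
      have := Finset.card_le_card this
      rw [Finset.card_univ, Fintype.card_fin] at this
      omega
    obtain ⟨a, hga⟩ := hgood
    set A := a.val with hA
    have hAK : A < K := a.isLt
    set b := i.val * A % K with hb
    have hbK : b < K := Nat.mod_lt _ (by omega)
    set u := (Nat.chineseRemainder hco A b).val with hu
    have hu1 : u % K = A := by
      have h := (Nat.chineseRemainder hco A b).2.1
      unfold Nat.ModEq at h
      rw [← hu] at h
      rwa [Nat.mod_eq_of_lt hAK] at h
    have hu2 : u % q = b := by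
      have h := (Nat.chineseRemainder hco A b).2.2
      unfold Nat.ModEq at h
      rw [← hu] at h
      rwa [Nat.mod_eq_of_lt (show b < q by omega)] at h
    have huL : u < L := by
      rw [hLdef, hu]
      exact Nat.chineseRemainder_lt_mul hco A b hK0 hq0
    have hτi : τ i < L := hτ i
    refine ⟨(u + (L - τ i)) % L, Nat.mod_lt _ hL0, ?_, ?_⟩
    · have hti : ((u + (L - τ i)) % L + τ i) % L = u := by
        rw [Nat.mod_add_mod, show u + (L - τ i) + τ i = u + L by omega,
          Nat.add_mod_right, Nat.mod_eq_of_lt huL]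
      rw [hti]
      simp [hu1, hu2, hb]
    · intro j hj
      have muK : Nat.ModEq K u A := by
        unfold Nat.ModEq; rw [hu1, Nat.mod_eq_of_lt hAK]
      have muq : Nat.ModEq q u b := by
        unfold Nat.ModEq; rw [hu2, Nat.mod_eq_of_lt (by omega)]
      have hsum : u + (L - τ i) + τ j = u + δ j := by
        simp only [hδ]; omega
      have hvK : (((u + (L - τ i)) % L + τ j) % L) % K = (A + δ j) % K := by
        rw [Nat.mod_mod_of_dvd _ hKL, crtui_modaux L K _ _ hKL, hsum]
        exact muK.add_right (δ j)
      have hvq : (((u + (L - τ i)) % L + τ j) % L) % q = (b + δ j) % q := by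
        rw [Nat.mod_mod_of_dvd _ hqL, crtui_modaux L q _ _ hqL, hsum]
        exact muq.add_right (δ j)
      dsimp only
      rw [hvK, hvq, if_neg]
      intro hcond
      apply hga
      rw [hBad, Finset.mem_filter]
      exact ⟨Finset.mem_univ _, j, hj, hcond⟩
end

section
/- For every integer K ≥ 2, there exists a (K, L)-UI sequence set whose period satisfies L ≤ 2K(2K−1). (This follows from the CRT-UI construction together with Bertrand's postulate.) -/
/-- Auxiliary cancellation lemma for the CRT construction. -/
lemma UI_keyaux (p K a b U U' Y Y' : ℕ) (hp : p.Prime) (hKp : K < p)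
    (ha : a < K) (hb : b < K) (hab : a ≠ b)
    (hY : Y < K) (hY' : Y' < K) (hYY' : Y ≤ Y')
    (hsum : U + Y' = Y + U')
    (hmod : a * U + b * Y' ≡ b * Y + a * U' [MOD p]) : Y = Y' := by
  set d := Y' - Y with hd
  have hY'e : Y' = Y + d := by omega
  have hU'e : U' = U + d := by omega
  rw [hY'e, hU'e] at hmod
  have e1 : a * U + b * (Y + d) = (a * U + b * Y) + b * d := by ring
  have e2 : b * Y + a * (U + d) = (a * U + b * Y) + a * d := by ring
  rw [e1, e2] at hmod
  have h2 : b * d ≡ a * d [MOD p] := Nat.ModEq.add_left_cancel' _ hmod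
  have hdp : p ∣ d := by
    rcases le_total a b with hab' | hab'
    · have hle : a * d ≤ b * d := Nat.mul_le_mul_right d hab'
      have hdvd : p ∣ b * d - a * d := (Nat.modEq_iff_dvd' hle).mp h2.symm
      rw [← Nat.sub_mul] at hdvd
      rcases hp.dvd_mul.mp hdvd with h | h
      · exfalso
        have hpos : 0 < b - a := by omega
        have := Nat.le_of_dvd hpos h
        omega
      · exact h
    · have hle : b * d ≤ a * d := Nat.mul_le_mul_right d hab'
      have hdvd : p ∣ a * d - b * d := (Nat.modEq_iff_dvd' hle).mp h2
      rw [← Nat.sub_mul] at hdvd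
      rcases hp.dvd_mul.mp hdvd with h | h
      · exfalso
        have hpos : 0 < a - b := by omega
        have := Nat.le_of_dvd hpos h
        omega
      · exact h
  have hd0 : d = 0 := Nat.eq_zero_of_dvd_of_lt hdp (by omega)
  omega

/-- for every integer `K ≥ 2` there exists a `(K, L)`-UI sequence set
whose period satisfies `L ≤ 2K(2K − 1)`. -/
theorem exists_UISet_le (K : ℕ) (hK : 2 ≤ K) :
    ∃ (L : ℕ) (s : Fin K → ℕ → ℕ),
      0 < L ∧ L ≤ 2 * K * (2 * K - 1) ∧
      (∀ i t, s i t = 0 ∨ s i t = 1) ∧ IsUISet K L s := by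
  classical
  obtain ⟨p, hp, hKp, hp2K⟩ := Nat.exists_prime_lt_and_le_two_mul K (by omega)
  have hplt : p < 2 * K := by
    rcases lt_or_eq_of_le hp2K with h | h
    · exact h
    · exfalso
      have hpe : p = 2 := hp.even_iff.mp ⟨K, by omega⟩
      omega
  set q : ℕ := 2 * K with hq
  set L : ℕ := 2 * K * p with hL
  have hppos : 0 < p := hp.pos
  have hLpos : 0 < L := by positivity
  have hqdvdL : q ∣ L := ⟨p, rfl⟩
  have hpdvdL : p ∣ L := ⟨2 * K, by ring⟩
  have hco : Nat.Coprime p q := by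
    rw [Nat.Prime.coprime_iff_not_dvd hp]
    rintro ⟨m, hm⟩
    rcases Nat.lt_or_ge m 2 with hm2 | hm2
    · interval_cases m <;> omega
    · have : p * 2 ≤ p * m := Nat.mul_le_mul_left p hm2
      omega
  set s : Fin K → ℕ → ℕ := fun i t =>
    if t % q < K ∧ t % p = (i.1 * (t % q)) % p then 1 else 0 with hs
  have hvals : ∀ i t, s i t = 0 ∨ s i t = 1 := by
    intro i t
    rw [hs]
    dsimp only
    split
    · right; rfl
    · left; rfl
  have hs1 : ∀ (j : Fin K) (m : ℕ), s j m = 1 →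
      m % q < K ∧ m % p = (j.1 * (m % q)) % p := by
    intro j m h
    by_contra hc
    rw [hs] at h
    dsimp only at h
    rw [if_neg hc] at h
    exact absurd h (by omega)
  refine ⟨L, s, hLpos, ?_, hvals, ?_⟩
  · calc L = 2 * K * p := rfl
    _ ≤ 2 * K * (2 * K - 1) := Nat.mul_le_mul_left _ (by omega)
  intro τ hτ i
  set u : ℕ → ℕ := fun Y => (Nat.chineseRemainder hco ((i.1 * Y) % p) Y).1 with hu
  have hu_p : ∀ Y, u Y ≡ (i.1 * Y) % p [MOD p] :=
    fun Y => (Nat.chineseRemainder hco ((i.1 * Y) % p) Y).2.1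
  have hu_q : ∀ Y, u Y ≡ Y [MOD q] :=
    fun Y => (Nat.chineseRemainder hco ((i.1 * Y) % p) Y).2.2
  have hu_lt : ∀ Y, u Y < L := by
    intro Y
    have h := Nat.chineseRemainder_lt_mul hco ((i.1 * Y) % p) Y (by omega) (by omega)
    have he : p * q = L := by rw [hq, hL]; ring
    rw [he] at h
    exact h
  set T : ℕ → ℕ := fun Y => (u Y + L - τ i) % L with hT
  have hT_lt : ∀ Y, T Y < L := fun Y => Nat.mod_lt _ hLpos
  have hTL : ∀ Y, T Y + τ i ≡ u Y [MOD L] := by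
    intro Y
    have h1 : T Y + τ i ≡ (u Y + L - τ i) + τ i [MOD L] :=
      Nat.ModEq.add_right _ (Nat.mod_modEq _ L)
    have h2 : (u Y + L - τ i) + τ i = u Y + L := by
      have := hτ i
      omega
    rw [h2] at h1
    have h3 : u Y + L ≡ u Y [MOD L] := by
      show (u Y + L) % L = u Y % L
      rw [Nat.add_mod_right]
    exact h1.trans h3
  have hTq : ∀ Y, T Y + τ i ≡ Y [MOD q] :=
    fun Y => ((hTL Y).of_dvd hqdvdL).trans (hu_q Y)
  have hTp : ∀ Y, T Y + τ i ≡ i.1 * Y [MOD p] :=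
    fun Y => ((hTL Y).of_dvd hpdvdL).trans ((hu_p Y).trans (Nat.mod_modEq _ p))
  -- congruences valid at any "bad" pair (j, Y)
  have hbadcong : ∀ (j : Fin K) (Y : ℕ), s j ((T Y + τ j) % L) = 1 →
      ((T Y + τ j) % q < K ∧
       ((T Y + τ j) % q) + τ i ≡ Y + τ j [MOD q] ∧
       j.1 * ((T Y + τ j) % q) + τ i ≡ i.1 * Y + τ j [MOD p]) := by
    intro j Y hbad
    obtain ⟨hU, hmp⟩ := hs1 j _ hbad
    rw [Nat.mod_mod_of_dvd _ hqdvdL] at hU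
    rw [Nat.mod_mod_of_dvd _ hpdvdL, Nat.mod_mod_of_dvd _ hqdvdL] at hmp
    set U := (T Y + τ j) % q with hUdef
    have c1 : U ≡ T Y + τ j [MOD q] := Nat.mod_modEq _ q
    have c2 : T Y + τ j ≡ j.1 * U [MOD p] := by
      show (T Y + τ j) % p = (j.1 * U) % p
      rw [hmp]
    refine ⟨hU, ?_, ?_⟩
    · calc U + τ i ≡ (T Y + τ j) + τ i [MOD q] := c1.add_right _
      _ = (T Y + τ i) + τ j := by ring
      _ ≡ Y + τ j [MOD q] := (hTq Y).add_right _
    · calc j.1 * U + τ i ≡ (T Y + τ j) + τ i [MOD p] := c2.symm.add_right _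
      _ = (T Y + τ i) + τ j := by ring
      _ ≡ i.1 * Y + τ j [MOD p] := (hTp Y).add_right _
  -- uniqueness of the bad frame index for each j ≠ i
  have huniq : ∀ j : Fin K, j ≠ i → ∀ Y, Y < K → ∀ Y', Y' < K →
      s j ((T Y + τ j) % L) = 1 → s j ((T Y' + τ j) % L) = 1 → Y = Y' := by
    intro j hj Y hY Y' hY' h1 h2
    obtain ⟨hU, hc1, hc2⟩ := hbadcong j Y h1
    obtain ⟨hU', hc1', hc2'⟩ := hbadcong j Y' h2
    set U := (T Y + τ j) % q with hUdef
    set U' := (T Y' + τ j) % q with hU'def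
    have hqsum : U + Y' = Y + U' := by
      have h3 : (U + τ i) + (Y' + τ j) ≡ (Y + τ j) + (U' + τ i) [MOD q] :=
        hc1.add hc1'.symm
      have e1 : (U + τ i) + (Y' + τ j) = (U + Y') + (τ i + τ j) := by ring
      have e2 : (Y + τ j) + (U' + τ i) = (Y + U') + (τ i + τ j) := by ring
      rw [e1, e2] at h3
      have h5 : U + Y' ≡ Y + U' [MOD q] := Nat.ModEq.add_right_cancel' _ h3
      have h6 : (U + Y') % q = (Y + U') % q := h5
      rw [Nat.mod_eq_of_lt (by omega), Nat.mod_eq_of_lt (by omega)] at h6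
      exact h6
    have hpm : j.1 * U + i.1 * Y' ≡ i.1 * Y + j.1 * U' [MOD p] := by
      have h3 := hc2.add hc2'.symm
      have e1 : (j.1 * U + τ i) + (i.1 * Y' + τ j)
          = (j.1 * U + i.1 * Y') + (τ i + τ j) := by ring
      have e2 : (i.1 * Y + τ j) + (j.1 * U' + τ i)
          = (i.1 * Y + j.1 * U') + (τ i + τ j) := by ring
      rw [e1, e2] at h3
      exact Nat.ModEq.add_right_cancel' _ h3
    have hij : j.1 ≠ i.1 := fun h => hj (Fin.ext h)
    rcases le_total Y Y' with hle | hle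
    · exact UI_keyaux p K j.1 i.1 U U' Y Y' hp hKp j.2 i.2 hij hY hY' hle hqsum hpm
    · refine (UI_keyaux p K j.1 i.1 U' U Y' Y hp hKp j.2 i.2 hij hY' hY hle
        (by omega) ?_).symm
      calc j.1 * U' + i.1 * Y = i.1 * Y + j.1 * U' := by ring
      _ ≡ j.1 * U + i.1 * Y' [MOD p] := hpm.symm
      _ = i.1 * Y' + j.1 * U := by ring
  -- counting bad frame indices
  set Bad : Finset ℕ := (Finset.univ.filter (fun j : Fin K => j ≠ i)).biUnion
      (fun j => (Finset.range K).filter (fun Y => s j ((T Y + τ j) % L) = 1)) with hBad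
  have hBadcard : Bad.card ≤ K - 1 := by
    have h1 : Bad.card ≤ (Finset.univ.filter (fun j : Fin K => j ≠ i)).card * 1 := by
      apply Finset.card_biUnion_le_card_mul
      intro j hj
      have hjne : j ≠ i := (Finset.mem_filter.mp hj).2
      apply Finset.card_le_one.mpr
      intro Y hY Y' hY'
      obtain ⟨hYr, hYs⟩ := Finset.mem_filter.mp hY
      obtain ⟨hY'r, hY's⟩ := Finset.mem_filter.mp hY'
      exact huniq j hjne Y (Finset.mem_range.mp hYr) Y' (Finset.mem_range.mp hY'r) hYs hY's
    have h2 : (Finset.univ.filter (fun j : Fin K => j ≠ i)).card = K - 1 := by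
      rw [Finset.filter_ne', Finset.card_erase_of_mem (Finset.mem_univ i),
        Finset.card_univ, Fintype.card_fin]
    omega
  have hlt : Bad.card < (Finset.range K).card := by
    rw [Finset.card_range]; omega
  have hns : ¬ (Finset.range K ⊆ Bad) :=
    fun hsub => absurd (Finset.card_le_card hsub) (not_le.mpr hlt)
  obtain ⟨Y, hYmem, hYnot⟩ := Finset.not_subset.mp hns
  have hYK : Y < K := Finset.mem_range.mp hYmem
  refine ⟨T Y, hT_lt Y, ?_, ?_⟩
  · have h1 : (T Y + τ i) % L % q = Y := by
      rw [Nat.mod_mod_of_dvd _ hqdvdL]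
      have h := hTq Y
      have h' : (T Y + τ i) % q = Y % q := h
      rw [h', Nat.mod_eq_of_lt (by omega)]
    have h2 : (T Y + τ i) % L % p = (i.1 * Y) % p := by
      rw [Nat.mod_mod_of_dvd _ hpdvdL]
      exact hTp Y
    rw [hs]
    dsimp only
    rw [if_pos]
    rw [h1, h2]
    exact ⟨hYK, rfl⟩
  · intro j hj
    rcases hvals j ((T Y + τ j) % L) with h0 | h1
    · exact h0
    · exfalso
      apply hYnot
      rw [hBad]
      exact Finset.mem_biUnion.mpr ⟨j, Finset.mem_filter.mpr ⟨Finset.mem_univ j, hj⟩,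
        Finset.mem_filter.mpr ⟨hYmem, h1⟩⟩
end

section
/- Let L and W be positive integers, let k ≥ 2 be an integer, let a_1,...,a_k be nonnegative integers with 0 < a_1 < L, and let w_2,...,w_k be nonnegative integers such that (as real numbers) w_2 ≥ L − L/W, w_j ≥ a_1 for all 3 ≤ j ≤ k, and a_j ≤ a_{j−1} − ⌈a_{j−1}·w_j/L⌉ for all 2 ≤ j ≤ k. Let ε be a real number satisfying b_2·W·ε ≤ a_1, where b_2 = ⌈a_1/W⌉, and define recursively b_j = b_{j−1} − ⌈b_{j−1}·b_2·W·ε/L⌉ for 3 ≤ j ≤ k. Then a_j ≤ b_j for all 2 ≤ j ≤ k. -/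
/-- Auxiliary: monotonicity of `x ↦ x - ⌈x·c/L⌉` on integers when `c ≤ L`. -/
lemma blocking_aux (A B : ℤ) (c Lr : ℝ) (hL : 0 < Lr) (hc : c ≤ Lr) (hAB : A ≤ B) :
    ⌈(B : ℝ) * c / Lr⌉ ≤ ⌈(A : ℝ) * c / Lr⌉ + (B - A) := by
  have hd : (0 : ℤ) ≤ B - A := by omega
  have hsplit : (B : ℝ) * c / Lr = (A : ℝ) * c / Lr + ((B - A : ℤ) : ℝ) * c / Lr := by
    push_cast
    field_simp
    ring
  rw [hsplit]
  calc ⌈(A : ℝ) * c / Lr + ((B - A : ℤ) : ℝ) * c / Lr⌉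
      ≤ ⌈(A : ℝ) * c / Lr⌉ + ⌈((B - A : ℤ) : ℝ) * c / Lr⌉ := Int.ceil_add_le _ _
    _ ≤ ⌈(A : ℝ) * c / Lr⌉ + (B - A) := by
        gcongr
        have hle : ((B - A : ℤ) : ℝ) * c / Lr ≤ ((B - A : ℤ) : ℝ) := by
          rw [div_le_iff₀ hL]
          have h0 : (0 : ℝ) ≤ ((B - A : ℤ) : ℝ) := by exact_mod_cast hd
          exact mul_le_mul_of_nonneg_left hc h0
        calc ⌈((B - A : ℤ) : ℝ) * c / Lr⌉ ≤ ⌈((B - A : ℤ) : ℝ)⌉ := Int.ceil_le_ceil hle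
          _ = B - A := Int.ceil_intCast _

/-- Theorem comparing the blocking-algorithm outputs `a_j` with the
recursive majorant `b_j`. -/
theorem blocking_majorant
    (L W k : ℕ) (hL : 0 < L) (hW : 0 < W) (hk : 2 ≤ k)
    (a w : ℕ → ℕ) (b : ℕ → ℤ) (ε : ℝ)
    (ha1 : 0 < a 1) (ha1L : a 1 < L)
    (hw2 : (L : ℝ) - (L : ℝ) / (W : ℝ) ≤ (w 2 : ℝ))
    (hwj : ∀ j : ℕ, 3 ≤ j → j ≤ k → a 1 ≤ w j)
    (harec : ∀ j : ℕ, 2 ≤ j → j ≤ k →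
      (a j : ℤ) ≤ (a (j - 1) : ℤ) - ⌈((a (j - 1) : ℝ) * (w j : ℝ)) / (L : ℝ)⌉)
    (hb2 : b 2 = ⌈(a 1 : ℝ) / (W : ℝ)⌉)
    (hbrec : ∀ j : ℕ, 3 ≤ j → j ≤ k →
      b j = b (j - 1) - ⌈((b (j - 1) : ℝ) * (b 2 : ℝ) * (W : ℝ) * ε) / (L : ℝ)⌉)
    (hε : (b 2 : ℝ) * (W : ℝ) * ε ≤ (a 1 : ℝ)) :
    ∀ j : ℕ, 2 ≤ j → j ≤ k → (a j : ℤ) ≤ b j := by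
  have hLr : (0 : ℝ) < (L : ℝ) := by exact_mod_cast hL
  have hWr : (0 : ℝ) < (W : ℝ) := by exact_mod_cast hW
  set c : ℝ := (b 2 : ℝ) * (W : ℝ) * ε with hc
  have hcL : c ≤ (L : ℝ) := le_trans hε (by exact_mod_cast ha1L.le)
  intro j hj
  induction j, hj using Nat.le_induction with
  | base =>
    intro hk2
    have h2 := harec 2 le_rfl hk2
    norm_num at h2
    rw [hb2]
    have hstep : ((a 1 : ℤ) - ⌈(a 1 : ℝ) / (W : ℝ)⌉ : ℤ) ≤ ⌈(a 1 : ℝ) * (w 2 : ℝ) / (L : ℝ)⌉ := by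
      have hle : (a 1 : ℝ) - (a 1 : ℝ) / (W : ℝ) ≤ (a 1 : ℝ) * (w 2 : ℝ) / (L : ℝ) := by
        have hcalc : (a 1 : ℝ) - (a 1 : ℝ) / (W : ℝ)
            = (a 1 : ℝ) * ((L : ℝ) - (L : ℝ) / (W : ℝ)) / (L : ℝ) := by
          field_simp
        rw [hcalc]
        have ha0 : (0 : ℝ) ≤ (a 1 : ℝ) := by positivity
        gcongr
      have h1 : ((a 1 : ℤ) - ⌈(a 1 : ℝ) / (W : ℝ)⌉ : ℝ) ≤ (a 1 : ℝ) * (w 2 : ℝ) / (L : ℝ) := by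
        push_cast
        have := Int.le_ceil ((a 1 : ℝ) / (W : ℝ))
        linarith
      calc ((a 1 : ℤ) - ⌈(a 1 : ℝ) / (W : ℝ)⌉ : ℤ)
          = ⌈(((a 1 : ℤ) - ⌈(a 1 : ℝ) / (W : ℝ)⌉ : ℤ) : ℝ)⌉ := (Int.ceil_intCast _).symm
        _ ≤ ⌈(a 1 : ℝ) * (w 2 : ℝ) / (L : ℝ)⌉ := Int.ceil_le_ceil (by push_cast at h1 ⊢; linarith)
    linarith
  | succ j hj3 ih =>
    intro hjk
    have hjk' : j ≤ k := by omega
    have ihj : (a j : ℤ) ≤ b j := ih hjk'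
    have hb := hbrec (j + 1) (by omega) hjk
    simp only [Nat.add_sub_cancel] at hb
    have ha := harec (j + 1) (by omega) hjk
    simp only [Nat.add_sub_cancel] at ha
    -- step 1: replace w (j+1) by c in the ceiling
    have hw : c ≤ (w (j + 1) : ℝ) := le_trans hε (by exact_mod_cast hwj (j + 1) (by omega) hjk)
    have hstep1 : ⌈(a j : ℝ) * c / (L : ℝ)⌉ ≤ ⌈(a j : ℝ) * (w (j + 1) : ℝ) / (L : ℝ)⌉ := by
      apply Int.ceil_le_ceil
      have ha0 : (0 : ℝ) ≤ (a j : ℝ) := by positivity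
      gcongr
    -- step 2: monotonicity
    have hstep2 := blocking_aux (a j : ℤ) (b j) c (L : ℝ) hLr hcL ihj
    push_cast at hstep2
    have hb' : b (j + 1) = b j - ⌈(b j : ℝ) * c / (L : ℝ)⌉ := by
      rw [hb, hc]; ring_nf
    rw [hb']
    linarith
end

section
/- Let W ≥ 2 and w ≥ 1 be integers, let p be a prime with p ≥ max{w, 2W−2}, let q be an integer coprime with both p and 2W satisfying q ≥ 2w−1, and let L' = pq. Let n ∈ {1,...,p−1} and let u_n be the CRT-UI sequence with generator n and weight w. For each m ∈ {1,...,W}, let δ_m be the unique element of Z_{L'} with Φ_{p,q}(δ_m) = (m−1, 0). Then for all distinct m, x ∈ {1,...,W}, every τ ∈ Z_{L'}, and each of the four sign choices, min( H_{n,n}(τ), H_{n,n}(τ ± (δ_m ± δ_x)) ) ≤ 1, where H_{n,n} is the Hamming auto-correlation of u_n. -/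
lemma crtUI_extract (p q w n σ : ℕ) (h : 0 < crtUIAutoCorr p q w n σ) :
    ∃ u v : ℕ, u < w ∧ v < w ∧
      (σ : ZMod p) = ((v : ZMod p) - (u : ZMod p)) * (n : ZMod p) ∧
      (σ : ZMod q) = (v : ZMod q) - (u : ZMod q) := by
  unfold crtUIAutoCorr at h
  obtain ⟨t, _, hne⟩ := Finset.exists_ne_zero_of_sum_ne_zero h.ne'
  have h1 : ∃ u ∈ Finset.range w, t % p = (u * n) % p ∧ t % q = u % q := by
    by_contra hc
    apply hne
    simp only [crtUI]
    rw [if_neg hc, zero_mul]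
  have h2 : ∃ u ∈ Finset.range w,
      ((t + σ) % (p * q)) % p = (u * n) % p ∧ ((t + σ) % (p * q)) % q = u % q := by
    by_contra hc
    apply hne
    simp only [crtUI]
    rw [if_neg hc, mul_zero]
  obtain ⟨u, hu, hup, huq⟩ := h1
  obtain ⟨v, hv, hvp, hvq⟩ := h2
  refine ⟨u, v, Finset.mem_range.mp hu, Finset.mem_range.mp hv, ?_, ?_⟩
  · have hup' : (t : ZMod p) = ((u * n : ℕ) : ZMod p) :=
      (ZMod.natCast_eq_natCast_iff _ _ _).mpr hup
    have hmod : (t + σ) % (p * q) % p = (t + σ) % p := Nat.mod_mod_of_dvd _ ⟨q, rfl⟩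
    have hvp' : ((t + σ : ℕ) : ZMod p) = ((v * n : ℕ) : ZMod p) :=
      (ZMod.natCast_eq_natCast_iff _ _ _).mpr (hmod.symm.trans hvp)
    push_cast at hup' hvp'
    linear_combination hvp' - hup'
  · have huq' : (t : ZMod q) = ((u : ℕ) : ZMod q) :=
      (ZMod.natCast_eq_natCast_iff _ _ _).mpr huq
    have hmod : (t + σ) % (p * q) % q = (t + σ) % q := Nat.mod_mod_of_dvd _ ⟨p, Nat.mul_comm p q⟩
    have hvq' : ((t + σ : ℕ) : ZMod q) = ((v : ℕ) : ZMod q) :=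
      (ZMod.natCast_eq_natCast_iff _ _ _).mpr (hmod.symm.trans hvq)
    push_cast at huq' hvq'
    linear_combination hvq' - huq'

/-- Proposition on pre-assigned offsets: let `W ≥ 2`, `w ≥ 1`, `p`
a prime with `p ≥ max{w, 2W−2}`, `q` coprime with both `p` and `2W` with `q ≥ 2w−1`,
and `L' = pq`. Let `u_n` be the CRT-UI sequence with generator `n ∈ {1,...,p−1}`, and
for `m ∈ {1,...,W}` let `δ_m ∈ Z_{L'}` be the unique element with
`Φ_{p,q}(δ_m) = (m−1, 0)`. Then for all distinct `m, x ∈ {1,...,W}`, every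
`τ ∈ Z_{L'}` and each of the four sign choices,
`min( H_{n,n}(τ), H_{n,n}(τ ± (δ_m ± δ_x)) ) ≤ 1`. -/
theorem crtUI_autoCorr_min_le_one
    (W w p q : ℕ) (hW : 2 ≤ W) (hw : 1 ≤ w)
    (hp : p.Prime) (hpw : w ≤ p) (hpW : 2 * W - 2 ≤ p)
    (hqp : Nat.Coprime q p) (hqW : Nat.Coprime q (2 * W)) (hq : 2 * w - 1 ≤ q)
    (n : ℕ) (hn1 : 1 ≤ n) (hn2 : n ≤ p - 1)
    (δ : ℕ → ℕ)
    (hδ : ∀ m : ℕ, 1 ≤ m → m ≤ W →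
      δ m < p * q ∧ δ m % p = (m - 1) % p ∧ δ m % q = 0)
    (m x : ℕ) (hm1 : 1 ≤ m) (hmW : m ≤ W) (hx1 : 1 ≤ x) (hxW : x ≤ W) (hmx : m ≠ x)
    (τ : ℕ) (hτ : τ < p * q) :
    ∀ e₁ e₂ : ℤ, (e₁ = 1 ∨ e₁ = -1) → (e₂ = 1 ∨ e₂ = -1) →
      min (crtUIAutoCorr p q w n τ)
        (crtUIAutoCorr p q w n
          (((τ : ℤ) + e₁ * ((δ m : ℤ) + e₂ * (δ x : ℤ))) % ((p : ℤ) * q)).toNat)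
        ≤ 1 := by
  intro e₁ e₂ he₁ he₂
  by_contra hcon
  push_neg at hcon
  obtain ⟨hc1, hc2⟩ := lt_min_iff.mp hcon
  haveI : NeZero p := ⟨hp.pos.ne'⟩
  haveI : NeZero q := ⟨by omega⟩
  set z : ℤ := (τ : ℤ) + e₁ * ((δ m : ℤ) + e₂ * (δ x : ℤ)) with hz
  set τ' : ℕ := (z % ((p : ℤ) * q)).toNat with hτ'
  have hM : (0 : ℤ) < (p : ℤ) * q := by
    have : 0 < p * q := Nat.mul_pos hp.pos (by omega)
    exact_mod_cast this
  obtain ⟨u₁, v₁, hu₁, hv₁, hP1, hQ1⟩ := crtUI_extract p q w n τ (by omega)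
  obtain ⟨u₂, v₂, hu₂, hv₂, hP2, hQ2⟩ := crtUI_extract p q w n τ' (by omega)
  -- cast of τ' in ZMod p and ZMod q
  have hτ'z : ((τ' : ℕ) : ℤ) = z % ((p : ℤ) * q) :=
    Int.toNat_of_nonneg (Int.emod_nonneg z hM.ne')
  have hτ'p : ((τ' : ℕ) : ZMod p) = ((z : ℤ) : ZMod p) := by
    rw [← Int.cast_natCast, hτ'z]
    exact (ZMod.intCast_eq_intCast_iff _ _ _).mpr
      (Int.emod_emod_of_dvd z (dvd_mul_right _ _))
  have hτ'q : ((τ' : ℕ) : ZMod q) = ((z : ℤ) : ZMod q) := by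
    rw [← Int.cast_natCast, hτ'z]
    exact (ZMod.intCast_eq_intCast_iff _ _ _).mpr
      (Int.emod_emod_of_dvd z (dvd_mul_left _ _))
  obtain ⟨-, hδmp, hδmq⟩ := hδ m hm1 hmW
  obtain ⟨-, hδxp, hδxq⟩ := hδ x hx1 hxW
  have hδmq0 : ((δ m : ℕ) : ZMod q) = 0 :=
    (ZMod.natCast_eq_zero_iff _ _).mpr (Nat.dvd_of_mod_eq_zero hδmq)
  have hδxq0 : ((δ x : ℕ) : ZMod q) = 0 :=
    (ZMod.natCast_eq_zero_iff _ _).mpr (Nat.dvd_of_mod_eq_zero hδxq)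
  have hδmp' : ((δ m : ℕ) : ZMod p) = (m : ZMod p) - 1 := by
    have h := (ZMod.natCast_eq_natCast_iff _ _ _).mpr (hδmp : δ m ≡ m - 1 [MOD p])
    rw [h, Nat.cast_sub hm1, Nat.cast_one]
  have hδxp' : ((δ x : ℕ) : ZMod p) = (x : ZMod p) - 1 := by
    have h := (ZMod.natCast_eq_natCast_iff _ _ _).mpr (hδxp : δ x ≡ x - 1 [MOD p])
    rw [h, Nat.cast_sub hx1, Nat.cast_one]
  -- mod q: same difference
  have hzq : ((z : ℤ) : ZMod q) = (τ : ZMod q) := by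
    rw [hz]; push_cast; rw [hδmq0, hδxq0]; ring
  have hdq : ((((v₂ : ℤ) - u₂) - ((v₁ : ℤ) - u₁)) : ℤ) = 0 := by
    by_contra hne
    have hcast : ((((v₂ : ℤ) - u₂) - ((v₁ : ℤ) - u₁) : ℤ) : ZMod q) = 0 := by
      push_cast
      have := hQ2.symm.trans (hτ'q.trans (hzq.trans hQ1))
      linear_combination this
    have hdvd : (q : ℤ) ∣ (((v₂ : ℤ) - u₂) - ((v₁ : ℤ) - u₁)) :=
      (ZMod.intCast_zmod_eq_zero_iff_dvd _ _).mp hcast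
    have hle := Int.le_of_dvd (abs_pos.mpr hne) ((dvd_abs _ _).mpr hdvd)
    have habs : |(((v₂ : ℤ) - u₂) - ((v₁ : ℤ) - u₁))| ≤ 2 * (w : ℤ) - 2 := by
      rw [abs_le]; omega
    omega
  -- mod p: contradiction
  have hdp : ((v₂ : ZMod p) - u₂) = ((v₁ : ZMod p) - u₁) := by
    have := congrArg (fun t : ℤ => ((t : ℤ) : ZMod p)) hdq
    push_cast at this
    linear_combination this
  have hzp : ((z : ℤ) : ZMod p) =
      (τ : ZMod p) + (e₁ : ZMod p) * (((m : ZMod p) - 1) + (e₂ : ZMod p) * ((x : ZMod p) - 1)) := by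
    rw [hz]; push_cast; rw [hδmp', hδxp']
  have hkey : (e₁ : ZMod p) * (((m : ZMod p) - 1) + (e₂ : ZMod p) * ((x : ZMod p) - 1)) = 0 := by
    have h1 : ((τ' : ℕ) : ZMod p) = (τ : ZMod p) := by
      rw [hP2, hP1, hdp]
    rw [hτ'p, hzp] at h1
    linear_combination h1
  have hA0 : ((((m : ℤ) - 1 + e₂ * ((x : ℤ) - 1)) : ℤ) : ZMod p) = 0 := by
    rcases he₁ with rfl | rfl <;> push_cast <;> push_cast at hkey <;>
      [linear_combination hkey; linear_combination -hkey]
  have hpd : (p : ℤ) ∣ ((m : ℤ) - 1 + e₂ * ((x : ℤ) - 1)) :=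
    (ZMod.intCast_zmod_eq_zero_iff_dvd _ _).mp hA0
  rcases he₂ with rfl | rfl
  · have h1 : (0 : ℤ) < (m : ℤ) - 1 + 1 * ((x : ℤ) - 1) := by omega
    have h2 := Int.le_of_dvd h1 hpd
    omega
  · have hne0 : ((m : ℤ) - 1 + -1 * ((x : ℤ) - 1)) ≠ 0 := by omega
    have h2 := Int.le_of_dvd (abs_pos.mpr hne0) ((dvd_abs _ _).mpr hpd)
    have h3 : |(m : ℤ) - 1 + -1 * ((x : ℤ) - 1)| ≤ (W : ℤ) - 1 := by
      rw [abs_le]; omega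
    omega
end

section
/- For every positive real number x, letting d be the unique positive integer with √(d−1) < x ≤ √d, define F(x) = x/d + (1/x)·Σ_{i=2}^{d} 1/i (the sum being empty when d = 1). Then F(x) ≤ 3/(2√2) for all x > 0, and F attains this global maximum value at x = √2. -/
noncomputable def Sh (n : ℕ) : ℝ := ∑ i ∈ Finset.Icc 2 n, (1:ℝ)/i

lemma Sh_nonneg (n : ℕ) : 0 ≤ Sh n :=
  Finset.sum_nonneg fun i _ => by positivity

lemma c_eq : 3 / (2 * Real.sqrt 2) = 3 * Real.sqrt 2 / 4 := by
  have h : Real.sqrt 2 * Real.sqrt 2 = 2 := Real.mul_self_sqrt (by norm_num)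
  have h0 : Real.sqrt 2 ≠ 0 := by positivity
  field_simp
  nlinarith [h]

lemma Sh_succ (n : ℕ) (hn : 1 ≤ n) : Sh (n+1) = Sh n + 1/(n+1) := by
  unfold Sh
  rw [Finset.sum_Icc_succ_top (by omega : 2 ≤ n+1)]
  push_cast
  ring

set_option maxHeartbeats 1000000 in
lemma harm_le (n : ℕ) (hn : 1 ≤ n) :
    1 + Sh n ≤ 3 / (2 * Real.sqrt 2) * Real.sqrt n := by
  rw [c_eq]
  have h2 : Real.sqrt 2 * Real.sqrt 2 = 2 := Real.mul_self_sqrt (by norm_num)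
  have h2n : (0:ℝ) ≤ Real.sqrt 2 := Real.sqrt_nonneg 2
  -- handle n = 1, 2, 3 separately, then induction for n ≥ 3
  rcases lt_or_ge n 3 with h3 | h3
  · interval_cases n
    · simp [Sh]
      nlinarith [h2, h2n]
    · have : Sh 2 = 1/2 := by norm_num [Sh]
      rw [this]
      have hs : Real.sqrt 2 * Real.sqrt ((2:ℕ):ℝ) = 2 := by norm_num [h2]
      nlinarith [hs]
  · induction n with
    | zero => omega
    | succ m ih =>
      rcases eq_or_lt_of_le h3 with h3' | h3'
      · -- m + 1 = 3
        have hm : m = 2 := by omega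
        subst hm
        have : Sh 3 = 1/2 + 1/3 := by norm_num [Sh, Finset.sum_Icc_succ_top]
        rw [this]
        have hcast : ((2+1:ℕ):ℝ) = 3 := by norm_num
        rw [hcast]
        have h3s : Real.sqrt 3 * Real.sqrt 3 = 3 := Real.mul_self_sqrt (by norm_num)
        have h3nn : (0:ℝ) ≤ Real.sqrt 3 := Real.sqrt_nonneg _
        have hb2 : (3 * Real.sqrt 2 / 4 * Real.sqrt 3) * (3 * Real.sqrt 2 / 4 * Real.sqrt 3) = 27/8 := by
          nlinarith [h2, h3s]
        have hbnn : 0 ≤ 3 * Real.sqrt 2 / 4 * Real.sqrt 3 := by positivity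
        nlinarith [hb2, hbnn]
      · -- m ≥ 3
        have hm3 : 3 ≤ m := by omega
        have ihm := ih (by omega) (by omega)
        rw [Sh_succ m (by omega)]
        set s := Real.sqrt m with hs
        set t := Real.sqrt ((m:ℝ)+1) with ht
        have hcast : ((m+1 : ℕ) : ℝ) = (m:ℝ) + 1 := by push_cast; ring
        rw [hcast]
        clear_value s t
        have hss : s * s = m := by rw [hs]; exact Real.mul_self_sqrt (by positivity)
        have htt : t * t = (m:ℝ)+1 := by rw [ht]; exact Real.mul_self_sqrt (by positivity)
        have hsnn : 0 ≤ s := hs ▸ Real.sqrt_nonneg _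
        have htnn : 0 ≤ t := ht ▸ Real.sqrt_nonneg _
        have hm3r : (3:ℝ) ≤ (m:ℝ) := by exact_mod_cast hm3
        have ht2 : 2 ≤ t := by nlinarith [htt, htnn, hm3r]
        have hts : s ≤ t := by nlinarith
        have hdiff : (t - s) * (t + s) = 1 := by nlinarith
        have hc1 : (1:ℝ) ≤ 3 * Real.sqrt 2 / 4 := by nlinarith
        -- need : 1 + (Sh m + 1/(m+1)) ≤ c * t
        clear ih hn h3 h3' hcast
        have key : 1/((m:ℝ)+1) ≤ 3 * Real.sqrt 2 / 4 * (t - s) := by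
          rw [div_le_iff₀ (by positivity : (0:ℝ) < (m:ℝ)+1)]
          have hfac : 0 ≤ 3 * Real.sqrt 2 / 4 * t * t - (t + s) := by nlinarith [hc1, ht2, hts]
          have hsub : 3 * Real.sqrt 2 / 4 * (t - s) * ((m:ℝ)+1) = 3 * Real.sqrt 2 / 4 * (t - s) * (t*t) := by
            rw [htt]
          nlinarith [mul_nonneg (sub_nonneg.mpr hts) hfac, hdiff, hsub]
        nlinarith [ihm, key]

/-- The piecewise function `F : (0,∞) → ℝ` defined on each subinterval
`I_d = (√(d−1), √d]` by `F(x) = x/d + (1/x)·Σ_{i=2}^{d} 1/i`. For `x > 0`, the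
unique positive integer `d` with `√(d−1) < x ≤ √d` is `d = ⌈x²⌉`. -/
noncomputable def Fpiece (x : ℝ) : ℝ :=
  x / ((⌈x ^ 2⌉ : ℤ) : ℝ) + (1 / x) * ∑ i ∈ Finset.Icc 2 (⌈x ^ 2⌉.toNat), (1 : ℝ) / i

set_option maxHeartbeats 1000000 in
/-- `F(x) ≤ 3/(2√2)` for all `x > 0`, and this global maximum is
attained at `x = √2`. -/
theorem Fpiece_le_and_max :
    (∀ x : ℝ, 0 < x → Fpiece x ≤ 3 / (2 * Real.sqrt 2)) ∧
    Fpiece (Real.sqrt 2) = 3 / (2 * Real.sqrt 2) := by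
  constructor
  · intro x hx
    have hx2 : (0:ℝ) < x^2 := by positivity
    have hd1 : 1 ≤ ⌈x^2⌉ := by
      have := Int.ceil_pos.mpr hx2
      omega
    set n : ℕ := ⌈x^2⌉.toNat with hn
    have hnn : 1 ≤ n := by omega
    have hcastd : ((⌈x^2⌉ : ℤ) : ℝ) = (n : ℝ) := by
      rw [hn]; norm_cast; omega
    have hFx : Fpiece x = x / (n:ℝ) + (1/x) * Sh n := by
      unfold Fpiece Sh
      rw [hcastd]
    have hxle : x^2 ≤ (n:ℝ) := by
      have h1 : x^2 ≤ ((⌈x^2⌉ : ℤ) : ℝ) := Int.le_ceil _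
      rw [hcastd] at h1; exact h1
    have hxgt : (n:ℝ) - 1 < x^2 := by
      have h1 : ((⌈x^2⌉ : ℤ) : ℝ) < x^2 + 1 := Int.ceil_lt_add_one _
      rw [hcastd] at h1; linarith
    rw [hFx]
    rcases eq_or_lt_of_le hnn with h1 | h2
    · -- n = 1 : F x = x ≤ 1 ≤ c
      rw [← h1]
      have hSh1 : Sh 1 = 0 := by norm_num [Sh]
      rw [hSh1]
      have hncast : ((n:ℕ):ℝ) = 1 := by rw [← h1]; norm_num
      have hx1 : x ≤ 1 := by nlinarith [hxle, hncast]
      have hs2 : Real.sqrt 2 * Real.sqrt 2 = 2 := Real.mul_self_sqrt (by norm_num)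
      have h2n : (0:ℝ) ≤ Real.sqrt 2 := Real.sqrt_nonneg 2
      rw [c_eq]
      push_cast
      nlinarith [hs2, h2n]
    · -- n ≥ 2
      have hn2 : 2 ≤ n := h2
      set a := Real.sqrt ((n:ℝ) - 1) with ha
      set b := Real.sqrt (n:ℝ) with hb
      have hn1r : (1:ℝ) ≤ (n:ℝ) - 1 := by
        have : (2:ℝ) ≤ (n:ℝ) := by exact_mod_cast hn2
        linarith
      have haa : a * a = (n:ℝ) - 1 := by
        rw [ha]; exact Real.mul_self_sqrt (by linarith)
      have hbb : b * b = (n:ℝ) := by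
        rw [hb]; exact Real.mul_self_sqrt (by positivity)
      have hann : 0 ≤ a := ha ▸ Real.sqrt_nonneg _
      have hbnn : 0 ≤ b := hb ▸ Real.sqrt_nonneg _
      have hapos : 0 < a := by nlinarith
      have hbpos : 0 < b := by nlinarith
      have hax : a < x := by nlinarith [hxgt]
      have hxb : x ≤ b := by nlinarith [hxle]
      have hnpos : (0:ℝ) < (n:ℝ) := by positivity
      have hS : 0 ≤ Sh n := Sh_nonneg n
      have hcast2 : ((n-1:ℕ):ℝ) = (n:ℝ) - 1 := by
        push_cast [Nat.cast_sub (by omega : 1 ≤ n)]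
        ring
      -- endpoint values
      have hgb : b / (n:ℝ) + (1/b) * Sh n ≤ 3 / (2 * Real.sqrt 2) := by
        have h1 : b / (n:ℝ) + (1/b) * Sh n = (1 + Sh n) / b := by
          field_simp
          nlinarith [hbb]
        rw [h1, div_le_iff₀ hbpos]
        have hh := harm_le n hnn
        rw [c_eq] at hh ⊢
        calc 1 + Sh n ≤ 3 * Real.sqrt 2 / 4 * Real.sqrt (n:ℝ) := hh
          _ = 3 * Real.sqrt 2 / 4 * b := by rw [hb]
      have hga : a / (n:ℝ) + (1/a) * Sh n ≤ 3 / (2 * Real.sqrt 2) := by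
        have hshn : Sh n = Sh (n-1) + 1/(n:ℝ) := by
          have h0 : n - 1 + 1 = n := by omega
          have hss := Sh_succ (n-1) (by omega)
          rw [h0] at hss
          rw [hss, hcast2]
          norm_num
        have h1 : a / (n:ℝ) + (1/a) * Sh n = (1 + Sh (n-1)) / a := by
          rw [hshn]
          field_simp
          linear_combination haa
        rw [h1, div_le_iff₀ hapos]
        have hh := harm_le (n-1) (by omega)
        rw [c_eq] at hh ⊢
        rw [hcast2] at hh
        calc 1 + Sh (n-1) ≤ 3 * Real.sqrt 2 / 4 * Real.sqrt ((n:ℝ)-1) := hh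
          _ = 3 * Real.sqrt 2 / 4 * a := by rw [ha]
      clear_value a b
      -- F x ≤ max of endpoints
      rcases le_or_gt (Sh n * (n:ℝ)) (x * b) with hcase | hcase
      · -- g x ≤ g b
        refine le_trans ?_ hgb
        have hid : b/(n:ℝ) + (1/b) * Sh n - (x/(n:ℝ) + (1/x) * Sh n)
            = (b - x) * (x*b - Sh n * (n:ℝ)) / ((n:ℝ)*x*b) := by
          field_simp
          ring
        have hpos : 0 ≤ (b - x) * (x*b - Sh n * (n:ℝ)) / ((n:ℝ)*x*b) :=
          div_nonneg (mul_nonneg (by linarith) (by linarith)) (by positivity)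
        linarith [hid ▸ hpos]
      · -- g x ≤ g a
        refine le_trans ?_ hga
        have hxab : x * a ≤ x * b := by
          apply mul_le_mul_of_nonneg_left (by linarith) hx.le
        have hid : a/(n:ℝ) + (1/a) * Sh n - (x/(n:ℝ) + (1/x) * Sh n)
            = (a - x) * (x*a - Sh n * (n:ℝ)) / ((n:ℝ)*x*a) := by
          field_simp
          ring
        have hnum : 0 ≤ (a - x) * (x*a - Sh n * (n:ℝ)) := by
          have h1 : (0:ℝ) ≤ x - a := by linarith
          have h2 : (0:ℝ) ≤ Sh n * (n:ℝ) - x*a := by linarith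
          nlinarith [mul_nonneg h1 h2]
        have hpos : 0 ≤ (a - x) * (x*a - Sh n * (n:ℝ)) / ((n:ℝ)*x*a) :=
          div_nonneg hnum (by positivity)
        linarith [hid ▸ hpos]
  · -- value at √2
    have h2 : Real.sqrt 2 ^ 2 = 2 := Real.sq_sqrt (by norm_num)
    have hs2 : Real.sqrt 2 * Real.sqrt 2 = 2 := Real.mul_self_sqrt (by norm_num)
    have hs2pos : (0:ℝ) < Real.sqrt 2 := Real.sqrt_pos.mpr (by norm_num)
    unfold Fpiece
    rw [h2]
    have hc : ⌈(2:ℝ)⌉ = 2 := by norm_num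
    rw [hc]
    have ht : (2:ℤ).toNat = 2 := rfl
    rw [ht]
    have hsum : ∑ i ∈ Finset.Icc 2 2, (1:ℝ)/(i:ℕ) = 1/2 := by
      rw [Finset.Icc_self, Finset.sum_singleton]; norm_num
    rw [hsum]
    rw [eq_div_iff (by positivity : (2:ℝ) * Real.sqrt 2 ≠ 0)]
    push_cast
    field_simp
    linear_combination h2
end
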